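/- arXiv:0705.0951 — 3 statements merged into one kernel-verified Lean document; each statement's English description precedes it below -/
import Mathlib

section
/- Let Λ be an odd unimodular lattice of signature (21,2), η ∈ Λ with η·η = 3 whose orthogonal complement Λ₀ is even, and let Γ̂ be the stabilizer of ℤη in O(Λ). Then any element of Γ̂ acting trivially on Λ₀ fixes η; consequently Γ̂ acts faithfully on Λ₀. -/
/-!
STATEMENT 1: Let Λ be an odd unimodular lattice of signature (21,2), η ∈ Λ with
η·η = 3 whose orthogonal complement Λ₀ is even, and let Γ̂ be the stabilizer of ℤη
in O(Λ). Then any element of Γ̂ acting trivially on Λ₀ fixes η; consequently Γ̂ acts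
faithfully on Λ₀.
-/

open Matrix

/-- The bilinear form associated to a Gram matrix `g`. -/
def B (g : Matrix (Fin 23) (Fin 23) ℤ) (x y : Fin 23 → ℤ) : ℤ := x ⬝ᵥ g.mulVec y

/-- `g` has signature (21,2): over ℝ it is congruent to diag(1²¹, (-1)²). -/
def HasSig212 (g : Matrix (Fin 23) (Fin 23) ℤ) : Prop :=
  ∃ P : Matrix (Fin 23) (Fin 23) ℝ, IsUnit P.det ∧
    Pᵀ * (g.map (fun n : ℤ => (n : ℝ))) * P =
      Matrix.diagonal (fun i : Fin 23 => if (i : ℕ) < 21 then (1 : ℝ) else -1)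

theorem stmt1
    -- Λ is a lattice of rank 23 with Gram matrix g, symmetric, odd, unimodular,
    -- of signature (21,2):
    (g : Matrix (Fin 23) (Fin 23) ℤ) (hsymm : g.IsSymm)
    (hodd : ∃ x : Fin 23 → ℤ, Odd (B g x x))
    (hunim : IsUnit g.det)
    (hsig : HasSig212 g)
    -- η ∈ Λ with η·η = 3:
    (η : Fin 23 → ℤ) (hη : B g η η = 3)
    -- the orthogonal complement Λ₀ of η is even:
    (heven : ∀ x : Fin 23 → ℤ, B g x η = 0 → Even (B g x x))
    -- φ is an element of O(Λ):
    (φ : (Fin 23 → ℤ) ≃ₗ[ℤ] (Fin 23 → ℤ))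
    (hiso : ∀ x y, B g (φ x) (φ y) = B g x y)
    -- φ stabilizes ℤη, i.e. φ ∈ Γ̂:
    (hstab : ∃ c : ℤ, φ η = c • η)
    -- φ acts trivially on Λ₀:
    (htriv : ∀ x : Fin 23 → ℤ, B g x η = 0 → φ x = x) :
    -- then φ fixes η, and consequently φ is the identity (faithfulness of the
    -- Γ̂-action on Λ₀):
    φ η = η ∧ ∀ x : Fin 23 → ℤ, φ x = x := by
  obtain ⟨c, hc⟩ := hstab
  -- bilinearity facts
  have hBsmul : ∀ (a b : ℤ) (x y : Fin 23 → ℤ),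
      B g (a • x) (b • y) = a * b * B g x y := by
    intro a b x y
    simp only [B, Matrix.mulVec_smul, dotProduct_smul, smul_dotProduct, smul_eq_mul]
    ring
  -- η is not divisible by 3 componentwise
  have hdvd_eta_false : (∀ i, (3 : ℤ) ∣ η i) → False := by
    intro hd
    have hv : η = (3 : ℤ) • (fun i => η i / 3) := by
      funext i
      simp only [Pi.smul_apply, smul_eq_mul]
      exact (Int.mul_ediv_cancel' (hd i)).symm
    have h9 : (3 : ℤ) * 3 * B g (fun i => η i / 3) (fun i => η i / 3) = 3 := by
      rw [← hBsmul, ← hv, hη]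
    omega
  -- c² = 1
  have hc2 : c * c = 1 := by
    have h1 : B g (φ η) (φ η) = 3 := by rw [hiso]; exact hη
    rw [hc, hBsmul, hη] at h1
    linarith
  -- key componentwise relation
  have hkey : ∀ (x : Fin 23 → ℤ) (i : Fin 23),
      3 * φ x i = 3 * x i + (B g x η) * (c - 1) * η i := by
    intro x i
    have hz : B g ((3 : ℤ) • x - (B g x η) • η) η = 0 := by
      have h3 : η ⬝ᵥ g.mulVec η = 3 := hη
      simp only [B, sub_dotProduct, smul_dotProduct, smul_eq_mul] at *
      rw [h3]; ring
    have hfix := htriv _ hz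
    rw [map_sub, _root_.map_smul, _root_.map_smul, hc] at hfix
    have h := congrFun hfix i
    simp only [Pi.sub_apply, Pi.smul_apply, smul_eq_mul] at h
    linarith [h]
  -- rule out c = -1
  have hc1 : c = 1 := by
    rcases Int.isUnit_iff.mp (IsUnit.of_mul_eq_one c hc2) with h | h
    · exact h
    · exfalso
      subst h
      apply hdvd_eta_false
      by_cases hall : ∀ x : Fin 23 → ℤ, (3 : ℤ) ∣ B g x η
      · -- then g.mulVec η ≡ 0 mod 3, hence η ≡ 0 mod 3 by unimodularity
        have hcol : ∀ j, (3 : ℤ) ∣ (g.mulVec η) j := by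
          intro j
          have := hall (Pi.single j 1)
          simpa [B, Pi.single_apply, dotProduct] using this
        intro i
        have hinv : g⁻¹ * g = 1 := Matrix.nonsing_inv_mul g hunim
        have hη' : (g⁻¹).mulVec (g.mulVec η) = η := by
          rw [Matrix.mulVec_mulVec, hinv, Matrix.one_mulVec]
        have : η i = ∑ j, g⁻¹ i j * (g.mulVec η) j := by
          conv_lhs => rw [← hη']
          simp [Matrix.mulVec, dotProduct]
        rw [this]
        exact Finset.dvd_sum fun j _ => Dvd.dvd.mul_left (hcol j) _
      · push_neg at hall
        obtain ⟨x, hx⟩ := hall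
        intro i
        have h := hkey x i
        have hd : (3 : ℤ) ∣ B g x η * (-1 - 1) * η i :=
          ⟨φ x i - x i, by linarith⟩
        have hp : Prime (3 : ℤ) := Int.prime_three
        rcases hp.dvd_mul.mp hd with h' | h'
        · rcases hp.dvd_mul.mp h' with h'' | h''
          · exact absurd h'' hx
          · omega
        · exact h'
  -- conclude
  subst hc1
  have hfix : ∀ x : Fin 23 → ℤ, φ x = x := by
    intro x
    funext i
    have := hkey x i
    omega
  exact ⟨hfix η, hfix⟩
end

section
/- Let Λ₀ be an even lattice with a distinguished ambient odd unimodular lattice Λ = Λ₀ ⊥' ℤη (primitive hull) where η·η = 3. If h ∈ Λ₀ satisfies h·h = 6 and η − h is divisible by 3 in Λ, then the map s_h : x ↦ x − (1/3)(x·h)h is an orthogonal transformation of Λ₀ ⊗ ℚ that preserves Λ₀. -/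
/-!
STATEMENT 3: Λ odd unimodular of signature (21,2), η ∈ Λ with η·η = 3, Λ₀ = η^⊥
even. If h ∈ Λ₀ satisfies h·h = 6 and η − h is divisible by 3 in Λ (h is a
special vector), then s_h : x ↦ x − (1/3)(x·h)h is an orthogonal transformation
of Λ₀ ⊗ ℚ that preserves Λ₀.
-/

open Matrix

/-- The bilinear form extended to Λ ⊗ ℚ. -/
def Bq (g : Matrix (Fin 23) (Fin 23) ℤ) (x y : Fin 23 → ℚ) : ℚ :=
  x ⬝ᵥ (g.map (fun n : ℤ => (n : ℚ))).mulVec y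

/-- Scalar extension ℤ²³ → ℚ²³. -/
def toQ (x : Fin 23 → ℤ) : Fin 23 → ℚ := fun i => (x i : ℚ)

lemma Bq_cast (g : Matrix (Fin 23) (Fin 23) ℤ) (x y : Fin 23 → ℤ) :
    Bq g (toQ x) (toQ y) = (B g x y : ℚ) := by
  simp [Bq, B, toQ, dotProduct, Matrix.mulVec, Matrix.map]

lemma Bq_sub_left (g : Matrix (Fin 23) (Fin 23) ℤ) (x y z : Fin 23 → ℚ) :
    Bq g (x - y) z = Bq g x z - Bq g y z := by
  simp [Bq, sub_dotProduct]

lemma Bq_smul_left (g : Matrix (Fin 23) (Fin 23) ℤ) (c : ℚ) (x z : Fin 23 → ℚ) :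
    Bq g (c • x) z = c * Bq g x z := by
  simp [Bq, smul_dotProduct]

lemma Bq_sub_right (g : Matrix (Fin 23) (Fin 23) ℤ) (x y z : Fin 23 → ℚ) :
    Bq g z (x - y) = Bq g z x - Bq g z y := by
  simp [Bq, Matrix.mulVec_sub, dotProduct_sub]

lemma Bq_smul_right (g : Matrix (Fin 23) (Fin 23) ℤ) (c : ℚ) (x z : Fin 23 → ℚ) :
    Bq g z (c • x) = c * Bq g z x := by
  simp [Bq, Matrix.mulVec_smul, dotProduct_smul]

lemma Bq_comm (g : Matrix (Fin 23) (Fin 23) ℤ) (hsymm : g.IsSymm) (x y : Fin 23 → ℚ) :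
    Bq g x y = Bq g y x := by
  have hs : (g.map (fun n : ℤ => (n : ℚ))).IsSymm := hsymm.map _
  rw [Bq, dotProduct_mulVec, ← hs.eq, vecMul_transpose, dotProduct_comm, Bq]

lemma B_add_left (g : Matrix (Fin 23) (Fin 23) ℤ) (x y z : Fin 23 → ℤ) :
    B g (x + y) z = B g x z + B g y z := by
  simp [B, add_dotProduct]

lemma B_smul_left (g : Matrix (Fin 23) (Fin 23) ℤ) (c : ℤ) (x z : Fin 23 → ℤ) :
    B g (c • x) z = c * B g x z := by
  simp only [B, smul_dotProduct, smul_eq_mul]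

lemma B_sub_right (g : Matrix (Fin 23) (Fin 23) ℤ) (x y z : Fin 23 → ℤ) :
    B g z (x - y) = B g z x - B g z y := by
  simp [B, Matrix.mulVec_sub, dotProduct_sub]

lemma B_nsmul_right (g : Matrix (Fin 23) (Fin 23) ℤ) (c : ℕ) (x z : Fin 23 → ℤ) :
    B g z (c • x) = (c : ℤ) * B g z x := by
  have hc : (c • x) = ((c : ℤ) • x) := by funext i; simp
  rw [B, hc, Matrix.mulVec_smul, dotProduct_smul, smul_eq_mul, B]

theorem stmt3
    (g : Matrix (Fin 23) (Fin 23) ℤ) (hsymm : g.IsSymm)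
    (hodd : ∃ x : Fin 23 → ℤ, Odd (B g x x))
    (hunim : IsUnit g.det)
    (hsig : HasSig212 g)
    (η : Fin 23 → ℤ) (hη : B g η η = 3)
    (heven : ∀ x : Fin 23 → ℤ, B g x η = 0 → Even (B g x x))
    -- h is a special vector: h ∈ Λ₀, h·h = 6, and 3 ∣ (η − h) in Λ:
    (h : Fin 23 → ℤ) (hhη : B g h η = 0) (hh : B g h h = 6)
    (hdiv : ∃ w : Fin 23 → ℤ, η - h = 3 • w) :
    -- s_h : x ↦ x − (1/3)(x·h)h on Λ₀ ⊗ ℚ: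
    -- (a) it maps Λ₀ ⊗ ℚ to itself,
    (∀ x : Fin 23 → ℚ, Bq g x (toQ η) = 0 →
        Bq g (x - ((1/3) * Bq g x (toQ h)) • toQ h) (toQ η) = 0) ∧
    -- (b) it is orthogonal on Λ₀ ⊗ ℚ,
    (∀ x y : Fin 23 → ℚ, Bq g x (toQ η) = 0 → Bq g y (toQ η) = 0 →
        Bq g (x - ((1/3) * Bq g x (toQ h)) • toQ h)
             (y - ((1/3) * Bq g y (toQ h)) • toQ h) = Bq g x y) ∧
    -- (c) it preserves the lattice Λ₀:
    (∀ x : Fin 23 → ℤ, B g x η = 0 → ∃ y : Fin 23 → ℤ, B g y η = 0 ∧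
        toQ y = toQ x - ((1/3) * Bq g (toQ x) (toQ h)) • toQ h) := by
  have hhηq : Bq g (toQ h) (toQ η) = 0 := by rw [Bq_cast, hhη]; norm_num
  have hhhq : Bq g (toQ h) (toQ h) = 6 := by rw [Bq_cast, hh]; norm_num
  refine ⟨?_, ?_, ?_⟩
  · intro x hx
    rw [Bq_sub_left, Bq_smul_left, hhηq, hx]; ring
  · intro x y hx hy
    rw [Bq_sub_left, Bq_smul_left, Bq_sub_right, Bq_sub_right, Bq_smul_right,
      Bq_smul_right, hhhq, Bq_comm g hsymm (toQ h) y]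
    ring
  · intro x hx
    obtain ⟨w, hw⟩ := hdiv
    have hxh : B g x h = -3 * B g x w := by
      have : B g x (η - h) = B g x (3 • w) := by rw [hw]
      rw [B_sub_right, B_nsmul_right, hx] at this
      push_cast at this
      linarith
    refine ⟨x + (B g x w) • h, ?_, ?_⟩
    · rw [B_add_left, B_smul_left, hhη, hx]; ring
    · funext i
      have : Bq g (toQ x) (toQ h) = ((-3 * B g x w : ℤ) : ℚ) := by
        rw [Bq_cast, hxh]
      simp only [this, toQ, Pi.sub_apply, Pi.smul_apply, Pi.add_apply, smul_eq_mul]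
      push_cast
      ring
end

section
/- Let Λ = 2E₈ ⊥ 2U ⊥ 3I with η = ε₁ + ε₂ + ε₃ and Λ₀ = η^⊥. Any two distinct special vectors h, h' ∈ Λ₀ (i.e. h·h = h'·h' = 6 and η−h, η−h' divisible by 3 in Λ) spanning a positive definite sublattice satisfy h·h' = −3. -/
open Matrix

/-- Edges of the E₈ Dynkin diagram (chain 0-1-2-3-4-5-6 with node 7 attached to node 2). -/
def e8Edges : List (Fin 8 × Fin 8) := [(0,1),(1,2),(2,3),(3,4),(4,5),(5,6),(2,7)]

/-- Gram matrix of the E₈ root lattice. -/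
def E8 : Matrix (Fin 8) (Fin 8) ℤ := Matrix.of fun i j =>
  if i = j then 2 else if (i, j) ∈ e8Edges ∨ (j, i) ∈ e8Edges then -1 else 0

/-- Gram matrix of the hyperbolic plane U. -/
def U2 : Matrix (Fin 2) (Fin 2) ℤ := !![0, 1; 1, 0]

/-- Index type for Λ = 2E₈ ⊥ 2U ⊥ 3I (rank 23). -/
abbrev Idx := (Fin 8 ⊕ Fin 8) ⊕ (Fin 2 ⊕ Fin 2) ⊕ Fin 3

/-- Gram matrix of Λ = 2E₈ ⊥ 2U ⊥ 3I. -/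
def G : Matrix Idx Idx ℤ := Matrix.of fun i j =>
  match i, j with
  | Sum.inl (Sum.inl a), Sum.inl (Sum.inl b) => E8 a b
  | Sum.inl (Sum.inr a), Sum.inl (Sum.inr b) => E8 a b
  | Sum.inr (Sum.inl (Sum.inl a)), Sum.inr (Sum.inl (Sum.inl b)) => U2 a b
  | Sum.inr (Sum.inl (Sum.inr a)), Sum.inr (Sum.inl (Sum.inr b)) => U2 a b
  | Sum.inr (Sum.inr a), Sum.inr (Sum.inr b) => if a = b then 1 else 0
  | _, _ => 0

/-- The bilinear form of Λ. -/
def Bf (x y : Idx → ℤ) : ℤ := x ⬝ᵥ G.mulVec y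

/-- The generator εₖ of the k-th I-summand. -/
def εv (k : Fin 3) : Idx → ℤ := fun i => match i with
  | Sum.inr (Sum.inr j) => if j = k then 1 else 0
  | _ => 0

/-- η = ε₁ + ε₂ + ε₃. -/
def η : Idx → ℤ := εv 0 + εv 1 + εv 2

/-- A special vector: an element h of Λ₀ = η^⊥ with h·h = 6 and η − h divisible by 3 in Λ. -/
def IsSpecial (h : Idx → ℤ) : Prop :=
  Bf h η = 0 ∧ Bf h h = 6 ∧ ∃ w : Idx → ℤ, η - h = 3 • w

lemma G_transpose : Gᵀ = G := by decide

lemma Bf_symm (x y : Idx → ℤ) : Bf x y = Bf y x := by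
  unfold Bf
  rw [Matrix.dotProduct_mulVec, ← Matrix.vecMul_transpose, G_transpose,
    dotProduct_comm]

/-!
STATEMENT 4: Any two distinct special vectors h, h' ∈ Λ₀ spanning a positive
definite sublattice satisfy h·h' = −3.
-/

theorem stmt4 (h h' : Idx → ℤ) (hs : IsSpecial h) (hs' : IsSpecial h') (hne : h ≠ h')
    -- h and h' span a positive definite sublattice:
    (hpos : ∀ a b : ℤ, a • h + b • h' ≠ 0 → 0 < Bf (a • h + b • h') (a • h + b • h')) :
    Bf h h' = -3 := by
  obtain ⟨-, hhh, w, hw⟩ := hs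
  obtain ⟨-, hh'h', w', hw'⟩ := hs'
  -- h' = h + 3 v
  set v : Idx → ℤ := w - w' with hv
  have hveq : h' = h + (3:ℤ) • v := by
    funext i
    have e1 := congrFun hw i
    have e2 := congrFun hw' i
    simp only [hv, Pi.sub_apply, Pi.add_apply, Pi.smul_apply, smul_eq_mul, nsmul_eq_mul] at e1 e2 ⊢
    omega
  have e1 : Bf h h' = 6 + 3 * Bf h v := by
    rw [hveq]
    simp only [Bf, Matrix.mulVec_add, Matrix.mulVec_smul, dotProduct_add,
      dotProduct_smul, smul_eq_mul, nsmul_eq_mul, nsmul_eq_mul] at hhh ⊢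
    omega
  have hsymm : Bf v h = Bf h v := Bf_symm v h
  have e2 : 6 + 6 * Bf h v + 9 * Bf v v = 6 := by
    calc 6 + 6 * Bf h v + 9 * Bf v v = Bf h' h' := by
          rw [hveq]
          simp only [Bf, Matrix.mulVec_add, Matrix.mulVec_smul, dotProduct_add,
            dotProduct_smul, add_dotProduct, smul_dotProduct, smul_eq_mul, nsmul_eq_mul] at hhh hsymm ⊢
          omega
      _ = 6 := hh'h'
  -- h + h' ≠ 0
  have hsum : h + h' ≠ 0 := by
    intro hc
    have e1 := congrFun hw (Sum.inr (Sum.inr 0))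
    have e2 := congrFun hw' (Sum.inr (Sum.inr 0))
    have e3 := congrFun hc (Sum.inr (Sum.inr 0))
    simp only [Pi.sub_apply, Pi.add_apply, Pi.smul_apply, smul_eq_mul, Pi.zero_apply,
      η, εv, Pi.add_apply] at e1 e2 e3
    norm_num at e1 e2
    omega
  have hdiff : h - h' ≠ 0 := fun hc => hne (by
    funext i
    have := congrFun hc i
    simp only [Pi.sub_apply, Pi.zero_apply] at this
    omega)
  have p1 : 0 < Bf (h + h') (h + h') := by
    have := hpos 1 1 (by simpa using hsum)
    simpa using this
  have p2 : 0 < Bf (h - h') (h - h') := by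
    have := hpos 1 (-1) (by
      simp only [one_smul, neg_one_smul, ← sub_eq_add_neg]
      exact hdiff)
    simpa [← sub_eq_add_neg] using this
  have hsymm' : Bf h' h = Bf h h' := Bf_symm h' h
  have q1 : Bf (h + h') (h + h') = 12 + 2 * Bf h h' := by
    simp only [Bf, Matrix.mulVec_add, dotProduct_add, add_dotProduct] at hhh hh'h' hsymm' ⊢
    omega
  have q2 : Bf (h - h') (h - h') = 12 - 2 * Bf h h' := by
    simp only [Bf, Matrix.mulVec_sub, dotProduct_sub, sub_dotProduct] at hhh hh'h' hsymm' ⊢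
    omega
  rw [q1] at p1
  rw [q2] at p2
  omega
end
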